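/- Let M be an n×n matrix with entries in [0,1] satisfying M_{ij} + M_{ji} = 1, whose rows are monotone when sorted by the true row-sum order, with row-sum (score) vector τ* (normalized by 1/(n−1)). Let π̂ be the permutation that sorts an estimated score vector τ̂ in decreasing order, and let π̂(M) denote M with rows and columns permuted accordingly. Then ∑_{i=1}^n ‖M_{π̂(i)} − M_i‖₁ ≤ 2(n−1)‖τ* − τ̂‖₁, where τ*_i = (1/(n−1))∑_{j≠i} M_{ij} and both (τ*_i) and (τ̂_{π̂^{-1}(i)}) are sorted in decreasing order. -/

import Mathlib

open Finset

private lemma stmt15_exchange (p q r s : ℝ) (hpr : r ≤ p) (hqs : s ≤ q) :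
    |p - q| + |r - s| ≤ |p - s| + |r - q| := by
  rcases abs_cases (p - q) with ⟨h1, h1'⟩ | ⟨h1, h1'⟩ <;>
  rcases abs_cases (r - s) with ⟨h2, h2'⟩ | ⟨h2, h2'⟩ <;>
  rcases abs_cases (p - s) with ⟨h3, h3'⟩ | ⟨h3, h3'⟩ <;>
  rcases abs_cases (r - q) with ⟨h4, h4'⟩ | ⟨h4, h4'⟩ <;>
  rw [h1, h2, h3, h4] <;> linarith

private lemma stmt15_rearrange {n : ℕ} (x z : Fin n → ℝ)
    (hx : ∀ a b : Fin n, a ≤ b → x b ≤ x a)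
    (hz : ∀ a b : Fin n, a ≤ b → z b ≤ z a) :
    ∀ (k : ℕ) (σ : Equiv.Perm (Fin n)), σ.support.card ≤ k →
      ∑ i, |x i - z i| ≤ ∑ i, |x i - z (σ i)| := by
  intro k
  induction k with
  | zero =>
    intro σ h
    have hσ : σ = 1 := by
      rw [← Equiv.Perm.support_eq_empty_iff]
      exact Finset.card_eq_zero.mp (Nat.le_antisymm h (Nat.zero_le _))
    subst hσ; simp
  | succ k ih =>
    intro σ h
    by_cases hσ : σ = 1
    · subst hσ; simp
    · have hne : σ.support.Nonempty := by
        rw [Finset.nonempty_iff_ne_empty]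
        intro hemp
        exact hσ (Equiv.Perm.support_eq_empty_iff.mp hemp)
      set i := σ.support.min' hne with hidef
      have himem : i ∈ σ.support := σ.support.min'_mem hne
      have hi : σ i ≠ i := Equiv.Perm.mem_support.mp himem
      have hiσ : i < σ i := by
        have : σ i ∈ σ.support := Equiv.Perm.apply_mem_support.mpr himem
        exact lt_of_le_of_ne (Finset.min'_le _ _ this) (Ne.symm hi)
      set a := σ.symm i with hadef
      have hσa : σ a = i := σ.apply_symm_apply i
      have hai : a ≠ i := by
        intro hcon
        apply hi
        rw [← hcon, hσa, hcon]
      have hamem : a ∈ σ.support := Equiv.Perm.mem_support.mpr (by rw [hσa]; exact fun h => hai h.symm)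
      have hia : i < a := lt_of_le_of_ne (Finset.min'_le _ _ hamem) (Ne.symm hai)
      set σ' := σ * Equiv.swap i a with hσ'def
      have hσ'i : σ' i = i := by
        simp [hσ'def, Equiv.swap_apply_left, hσa]
      have hσ'a : σ' a = σ i := by
        simp [hσ'def, Equiv.swap_apply_right]
      have hσ'other : ∀ j, j ≠ i → j ≠ a → σ' j = σ j := by
        intro j hji hja
        simp [hσ'def, Equiv.swap_apply_of_ne_of_ne hji hja]
      have hsub : σ'.support ⊆ σ.support.erase i := by
        intro j hj
        have hjne : σ' j ≠ j := Equiv.Perm.mem_support.mp hj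
        rcases eq_or_ne j i with rfl | hji
        · exact absurd hσ'i hjne
        · rcases eq_or_ne j a with rfl | hja
          · exact Finset.mem_erase.mpr ⟨hji, hamem⟩
          · rw [hσ'other j hji hja] at hjne
            exact Finset.mem_erase.mpr ⟨hji, Equiv.Perm.mem_support.mpr hjne⟩
        
      have hcard : σ'.support.card ≤ k := by
        have h1 := Finset.card_le_card hsub
        have h2 : (σ.support.erase i).card = σ.support.card - 1 :=
          Finset.card_erase_of_mem himem
        omega
      have step1 := ih σ' hcard
      have step2 : ∑ j, |x j - z (σ' j)| ≤ ∑ j, |x j - z (σ j)| := by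
        have hx' : x a ≤ x i := hx i a hia.le
        have hz' : z (σ i) ≤ z i := hz i (σ i) hiσ.le
        have hex := stmt15_exchange (x i) (z i) (x a) (z (σ i)) hx' hz'
        have hsplit : ∀ f : Fin n → ℝ, ∑ j, f j =
            f i + (f a + ∑ j ∈ (Finset.univ.erase i).erase a, f j) := by
          intro f
          rw [Finset.add_sum_erase _ f (Finset.mem_erase.mpr ⟨hai, Finset.mem_univ a⟩),
            Finset.add_sum_erase _ f (Finset.mem_univ i)]
        rw [hsplit (fun j => |x j - z (σ' j)|), hsplit (fun j => |x j - z (σ j)|)]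
        have hrest : ∑ j ∈ (Finset.univ.erase i).erase a, |x j - z (σ' j)| =
            ∑ j ∈ (Finset.univ.erase i).erase a, |x j - z (σ j)| := by
          apply Finset.sum_congr rfl
          intro j hj
          have hja : j ≠ a := (Finset.mem_erase.mp hj).1
          have hji : j ≠ i := (Finset.mem_erase.mp (Finset.mem_erase.mp hj).2).1
          rw [hσ'other j hji hja]
        rw [hrest, hσ'i, hσ'a, hσa]
        linarith
      exact le_trans step1 step2

/-- For an SST matrix `M` (entries in `[0,1]`, skew-complementary, columns monotone in the
true order, taken to be the identity), scores `τ*` given by normalized row sums, and a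
permutation `π̂` sorting the estimated scores `τ̂` in decreasing order,
`∑ i ‖M_{π̂(i)} − M_i‖₁ ≤ 2(n−1)‖τ* − τ̂‖₁`. -/
theorem stmt15 (n : ℕ) (hn : 2 ≤ n) (M : Fin n → Fin n → ℝ)
    (h01 : ∀ i j, M i j ∈ Set.Icc (0 : ℝ) 1)
    (hskew : ∀ i j, M i j + M j i = 1)
    (hcol : ∀ j : Fin n, ∀ a b : Fin n, a ≤ b → M b j ≤ M a j)
    (tstar that : Fin n → ℝ)
    (htstar : ∀ i, tstar i =
      (1 / ((n : ℝ) - 1)) * ∑ j ∈ Finset.univ.filter (fun j => j ≠ i), M i j)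
    (pihat : Equiv.Perm (Fin n))
    (hsort : ∀ a b : Fin n, a ≤ b → that (pihat.symm b) ≤ that (pihat.symm a)) :
    ∑ i, ∑ j, |M (pihat i) j - M i j| ≤
      2 * ((n : ℝ) - 1) * ∑ i, |tstar i - that i| := by
  have hn1 : (1 : ℝ) ≤ (n : ℝ) - 1 := by
    have : (2 : ℝ) ≤ (n : ℝ) := by exact_mod_cast hn
    linarith
  have hnne : ((n : ℝ) - 1) ≠ 0 := by linarith
  have hnpos : (0 : ℝ) ≤ (n : ℝ) - 1 := by linarith
  -- row sum identity
  have hS : ∀ i : Fin n, ∑ j, M i j = ((n : ℝ) - 1) * tstar i + 1 / 2 := by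
    intro i
    have hdiag : M i i = 1 / 2 := by have := hskew i i; linarith
    have hfil : Finset.univ.filter (fun j => j ≠ i) = Finset.univ.erase i := by
      ext j; simp [Finset.mem_erase, and_comm]
    have hsum : ∑ j, M i j = M i i + ∑ j ∈ Finset.univ.erase i, M i j :=
      (Finset.add_sum_erase _ _ (Finset.mem_univ i)).symm
    rw [hsum, hdiag, htstar i, hfil]
    field_simp
    ring
  -- row difference identity for a ≤ b
  have hA : ∀ a b : Fin n, a ≤ b →
      ∑ j, |M a j - M b j| = ((n : ℝ) - 1) * (tstar a - tstar b) := by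
    intro a b hab
    have habs : ∀ j, |M a j - M b j| = M a j - M b j := fun j =>
      abs_of_nonneg (by linarith [hcol j a b hab])
    calc ∑ j, |M a j - M b j| = ∑ j, (M a j - M b j) :=
          Finset.sum_congr rfl (fun j _ => habs j)
      _ = (∑ j, M a j) - ∑ j, M b j := Finset.sum_sub_distrib _ _
      _ = ((n : ℝ) - 1) * (tstar a - tstar b) := by rw [hS a, hS b]; ring
  -- tstar is antitone
  have htmono : ∀ a b : Fin n, a ≤ b → tstar b ≤ tstar a := by
    intro a b hab
    have h1 : (0 : ℝ) ≤ ∑ j, |M a j - M b j| :=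
      Finset.sum_nonneg fun j _ => abs_nonneg _
    rw [hA a b hab] at h1
    nlinarith
  -- general row difference identity
  have hA' : ∀ a b : Fin n, ∑ j, |M a j - M b j| = ((n : ℝ) - 1) * |tstar a - tstar b| := by
    intro a b
    rcases le_total a b with hab | hab
    · rw [hA a b hab, abs_of_nonneg (by linarith [htmono a b hab])]
    · have : ∑ j, |M a j - M b j| = ∑ j, |M b j - M a j| :=
        Finset.sum_congr rfl fun j _ => abs_sub_comm _ _
      rw [this, hA b a hab, abs_sub_comm,
        abs_of_nonneg (by linarith [htmono b a hab])]
  set z : Fin n → ℝ := fun i => that (pihat.symm i) with hzdef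
  have hre : ∑ i, |tstar i - z i| ≤ ∑ i, |tstar i - that i| := by
    have := stmt15_rearrange tstar z htmono hsort (Equiv.Perm.support pihat).card
      pihat le_rfl
    calc ∑ i, |tstar i - z i| ≤ ∑ i, |tstar i - z (pihat i)| := this
      _ = ∑ i, |tstar i - that i| := by
          apply Finset.sum_congr rfl; intro i _
          simp [hzdef]
  calc ∑ i, ∑ j, |M (pihat i) j - M i j|
      = ∑ i, ((n : ℝ) - 1) * |tstar (pihat i) - tstar i| :=
        Finset.sum_congr rfl fun i _ => hA' (pihat i) i
    _ = ((n : ℝ) - 1) * ∑ i, |tstar (pihat i) - tstar i| := by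
        rw [Finset.mul_sum]
    _ = ((n : ℝ) - 1) * ∑ i, |tstar i - tstar (pihat.symm i)| := by
        congr 1
        rw [← Equiv.sum_comp pihat.symm (fun i => |tstar (pihat i) - tstar i|)]
        apply Finset.sum_congr rfl; intro i _; simp
    _ ≤ ((n : ℝ) - 1) * ∑ i, (|tstar i - z i| + |z i - tstar (pihat.symm i)|) := by
        apply mul_le_mul_of_nonneg_left _ hnpos
        exact Finset.sum_le_sum fun i _ => abs_sub_le _ _ _
    _ = ((n : ℝ) - 1) * (∑ i, |tstar i - z i| + ∑ i, |tstar i - that i|) := by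
        rw [Finset.sum_add_distrib]
        congr 2
        rw [← Equiv.sum_comp pihat.symm (fun i => |tstar i - that i|)]
        apply Finset.sum_congr rfl; intro i _
        rw [abs_sub_comm]
    _ ≤ ((n : ℝ) - 1) * (∑ i, |tstar i - that i| + ∑ i, |tstar i - that i|) := by
        apply mul_le_mul_of_nonneg_left _ hnpos
        linarith [hre]
    _ = 2 * ((n : ℝ) - 1) * ∑ i, |tstar i - that i| := by ring
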